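/- Let n be a positive natural number and b = 2^m. Let A, B : Matrix (Fin n) (Fin n) ℝ with C = A * B. Let H1, H2 : Ω → (Fin n → Fin b) and S1, S2 : Ω → (Fin n → ({-1,1} : Set ℝ)) be mutually independent random functions, where each of H1, H2 is a pairwise independent uniform family into Fin b and each of S1, S2 is a pairwise independent uniform family of random signs. Define the random sketch P[k] = Σ_{(i',j') : H1(i') XOR H2(j') = k} S1(i')·S2(j')·C[i'][j'] and the estimator X̃(i,j) = S1(i)·S2(j)·P[H1(i) XOR H2(j)]. Then for every (i, j), E[X̃(i,j)] = C[i][j]; the FWHT-based compressed matrix multiplication estimator is unbiased. -/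

import Mathlib

open MeasureTheory
open scoped ENNReal ProbabilityTheory

/-- Bitwise XOR on `Fin (2^m)`. -/
def fxor {m : ℕ} (i j : Fin (2^m)) : Fin (2^m) :=
  ⟨i.val ^^^ j.val, Nat.xor_lt_two_pow i.isLt j.isLt⟩

/-- The FWHT compressed-product sketch of a matrix `C` under hash functions
`h1, h2` and sign functions `s1, s2`:
`p[k] = Σ_{h1(i') ⊕ h2(j') = k} s1(i')·s2(j')·C[i'][j']`. -/
def sketch {n m : ℕ} (C : Matrix (Fin n) (Fin n) ℝ)
    (h1 h2 : Fin n → Fin (2^m)) (s1 s2 : Fin n → ℝ) : Fin (2^m) → ℝ :=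
  fun k => ∑ p ∈ Finset.univ.filter
      (fun p : Fin n × Fin n => fxor (h1 p.1) (h2 p.2) = k),
    s1 p.1 * s2 p.2 * C p.1 p.2

/-- The decompressed estimate of entry `(i,j)`:
`s1(i)·s2(j)·p[h1(i) ⊕ h2(j)]`. -/
def estimate {n m : ℕ} (C : Matrix (Fin n) (Fin n) ℝ)
    (h1 h2 : Fin n → Fin (2^m)) (s1 s2 : Fin n → ℝ) (i j : Fin n) : ℝ :=
  s1 i * s2 j * sketch C h1 h2 s1 s2 (fxor (h1 i) (h2 j))


set_option linter.unusedSectionVars false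
namespace CMMaux

noncomputable def sg : Bool → ℝ := fun b => if b then 1 else -1

lemma sg_mem (b : Bool) : sg b ∈ ({-1, 1} : Set ℝ) := by cases b <;> simp [sg]

lemma sg_sq (b : Bool) : sg b * sg b = 1 := by cases b <;> norm_num [sg]

lemma decide_eq_iff {x : ℝ} (hx : x ∈ ({-1, 1} : Set ℝ)) (b : Bool) :
    (decide (x = 1) = b) ↔ x = sg b := by
  rcases hx with h | h <;> subst h <;> cases b <;> simp [sg] <;> norm_num

lemma sum4_factor {A B C D : Type*} [Fintype A] [Fintype B] [Fintype C] [Fintype D]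
    (x : A → B → ℝ) (y : C → ℝ) (z : D → ℝ) (c0 : ℝ) :
    ∑ t : A × B × C × D, x t.1 t.2.1 * y t.2.2.1 * (z t.2.2.2 * c0)
      = (∑ a, ∑ b, x a b) * (∑ c, y c) * ((∑ d, z d) * c0) := by
  simp only [Fintype.sum_prod_type, ← Finset.mul_sum, ← Finset.sum_mul]

section Meas

variable {Ω : Type*} [MeasureSpace Ω] [IsProbabilityMeasure (ℙ : Measure Ω)] {n : ℕ}

/-- generic: sum over all values of (ℙ (F⁻¹ {g})).toReal is 1 -/
lemma sum_meas_preimage_eq_one {γ : Type*} [Fintype γ] [DecidableEq γ] [MeasurableSpace γ]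
    [MeasurableSingletonClass γ] (F : Ω → γ) (hm : Measurable F) :
    ∑ g : γ, (ℙ (F ⁻¹' {g})).toReal = 1 := by
  rw [← ENNReal.toReal_sum (fun a _ => measure_ne_top _ _)]
  have : ∑ g ∈ Finset.univ, ℙ (F ⁻¹' {g}) = ℙ (⋃ g ∈ Finset.univ, F ⁻¹' {g}) := by
    rw [measure_biUnion_finset]
    · intro a _ b _ hab
      exact Set.disjoint_left.2 fun ω h1 h2 => hab (h1.symm.trans h2)
    · exact fun b _ => hm (measurableSet_singleton b)
  rw [this]
  have : (⋃ g ∈ Finset.univ, F ⁻¹' {g}) = Set.univ := by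
    ext ω; simp
  rw [this, measure_univ, ENNReal.toReal_one]

lemma meas_preimage_finset {γ : Type*} [Fintype γ] [DecidableEq γ] [MeasurableSpace γ]
    [MeasurableSingletonClass γ] (F : Ω → γ) (hm : Measurable F) (s : Finset γ) :
    ℙ (F ⁻¹' ↑s) = ∑ g ∈ s, ℙ (F ⁻¹' {g}) := by
  rw [← measure_biUnion_finset]
  · congr 1; ext ω; simp
  · intro a _ b _ hab
    exact Set.disjoint_left.2 fun ω h1 h2 => hab (h1.symm.trans h2)
  · exact fun b _ => hm (measurableSet_singleton b)

variable (S : Ω → Fin n → ℝ)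

/-- boolean coding of a sign function -/
noncomputable def toB (S : Ω → Fin n → ℝ) : Ω → Fin n → Bool := fun ω k => decide (S ω k = 1)

lemma toB_measurable (hm : Measurable S) : Measurable (toB S) := by
  apply measurable_pi_lambda
  intro k
  apply measurable_to_countable
  intro ω
  have key : ∀ b : Bool, MeasurableSet ((fun c => toB S c k) ⁻¹' {b}) := by
    intro b
    cases b
    · have : (fun c => toB S c k) ⁻¹' {false} = (fun c => S c k) ⁻¹' ({1}ᶜ) := by
        ext c; simp [toB]
      rw [this]
      exact (hm.eval (a := k)) (measurableSet_singleton (1:ℝ)).compl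
    · have : (fun c => toB S c k) ⁻¹' {true} = (fun c => S c k) ⁻¹' {1} := by
        ext c; simp [toB]
      rw [this]
      exact (hm.eval (a := k)) (measurableSet_singleton (1:ℝ))
  exact key _

variable (hval : ∀ ω k, S ω k ∈ ({-1, 1} : Set ℝ))

include hval in
lemma toB_preimage (t : Fin n → Bool) :
    (toB S) ⁻¹' {t} = {ω | S ω = sg ∘ t} := by
  ext ω
  simp only [Set.mem_preimage, Set.mem_singleton_iff, Set.mem_setOf_eq, funext_iff]
  constructor
  · intro h k; exact (decide_eq_iff (hval ω k) (t k)).1 (h k)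
  · intro h k; exact (decide_eq_iff (hval ω k) (t k)).2 (h k)

include hval in
lemma sum_nu_eq_one (hm : Measurable S) :
    ∑ t : Fin n → Bool, (ℙ {ω | S ω = sg ∘ t}).toReal = 1 := by
  have := sum_meas_preimage_eq_one (toB S) (toB_measurable S hm)
  simpa only [toB_preimage S hval] using this

include hval in
lemma fiber_sum (i i' : Fin n) (a b : Bool) (hm : Measurable S) :
    ∑ t ∈ Finset.univ.filter (fun t : Fin n → Bool => (t i, t i') = (a, b)),
        (ℙ {ω | S ω = sg ∘ t}).toReal
      = (ℙ {ω | S ω i = sg a ∧ S ω i' = sg b}).toReal := by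
  have key : ℙ {ω | S ω i = sg a ∧ S ω i' = sg b}
      = ∑ t ∈ Finset.univ.filter (fun t : Fin n → Bool => (t i, t i') = (a, b)),
          ℙ ((toB S) ⁻¹' {t}) := by
    rw [← meas_preimage_finset (toB S) (toB_measurable S hm)]
    congr 1
    ext ω
    simp only [Set.mem_preimage, Finset.coe_filter, Finset.mem_univ, true_and,
      Set.mem_setOf_eq, Prod.mk.injEq]
    constructor
    · rintro ⟨h1, h2⟩
      refine ⟨(decide_eq_iff (hval ω i) a).2 h1, (decide_eq_iff (hval ω i') b).2 h2⟩
    · rintro ⟨h1, h2⟩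
      exact ⟨(decide_eq_iff (hval ω i) a).1 h1, (decide_eq_iff (hval ω i') b).1 h2⟩
  rw [key, ENNReal.toReal_sum (fun a _ => measure_ne_top _ _)]
  exact Finset.sum_congr rfl fun t _ => by rw [toB_preimage S hval]

include hval in
lemma sum_sign_zero (hm : Measurable S)
    (hunif : ∀ k, ∀ u ∈ ({-1, 1} : Set ℝ), ℙ {ω | S ω k = u} = 1 / 2)
    (hpair : ∀ k k', k ≠ k' → ∀ u v : ℝ,
      ℙ {ω | S ω k = u ∧ S ω k' = v} = ℙ {ω | S ω k = u} * ℙ {ω | S ω k' = v})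
    (i i' : Fin n) (h : i ≠ i') :
    ∑ t : Fin n → Bool, sg (t i) * sg (t i') * (ℙ {ω | S ω = sg ∘ t}).toReal = 0 := by
  classical
  rw [← Finset.sum_fiberwise (Finset.univ) (fun t : Fin n → Bool => (t i, t i'))
      (fun t => sg (t i) * sg (t i') * (ℙ {ω | S ω = sg ∘ t}).toReal)]
  have inner : ∀ ab : Bool × Bool,
      (∑ t ∈ Finset.univ.filter (fun t : Fin n → Bool => (t i, t i') = ab),
        sg (t i) * sg (t i') * (ℙ {ω | S ω = sg ∘ t}).toReal)
      = sg ab.1 * sg ab.2 * (1/4 : ℝ) := by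
    rintro ⟨a, b⟩
    have h1 : (∑ t ∈ Finset.univ.filter (fun t : Fin n → Bool => (t i, t i') = (a, b)),
        sg (t i) * sg (t i') * (ℙ {ω | S ω = sg ∘ t}).toReal)
        = sg a * sg b * ∑ t ∈ Finset.univ.filter
            (fun t : Fin n → Bool => (t i, t i') = (a, b)),
            (ℙ {ω | S ω = sg ∘ t}).toReal := by
      rw [Finset.mul_sum]
      refine Finset.sum_congr rfl fun t ht => ?_
      simp only [Finset.mem_filter, Prod.mk.injEq] at ht
      rw [ht.2.1, ht.2.2, mul_assoc]
    rw [h1, fiber_sum S hval i i' a b hm]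
    have h2 : ℙ {ω | S ω i = sg a ∧ S ω i' = sg b} = 1/2 * (1/2 : ℝ≥0∞) := by
      rw [hpair i i' h, hunif i _ (sg_mem a), hunif i' _ (sg_mem b)]
    rw [h2, ENNReal.toReal_mul]
    norm_num
  calc ∑ ab : Bool × Bool, (∑ t ∈ Finset.univ.filter
          (fun t : Fin n → Bool => (t i, t i') = ab),
          sg (t i) * sg (t i') * (ℙ {ω | S ω = sg ∘ t}).toReal)
      = ∑ ab : Bool × Bool, sg ab.1 * sg ab.2 * (1/4 : ℝ) := by
        exact Finset.sum_congr rfl fun ab _ => inner ab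
    _ = 0 := by
        rw [Fintype.sum_prod_type]
        simp [Fintype.sum_bool, sg]

include hval in
lemma toB_eq_iff (ω : Ω) (t : Fin n → Bool) : toB S ω = t ↔ S ω = sg ∘ t := by
  have := Set.ext_iff.1 (toB_preimage S hval t) ω
  simpa using this

end Meas

end CMMaux

open CMMaux in
theorem compressed_mm_fwht_unbiased
    {Ω : Type*} [MeasureSpace Ω] [IsProbabilityMeasure (ℙ : Measure Ω)]
    (n m : ℕ) (hn : 0 < n)
    (A B C : Matrix (Fin n) (Fin n) ℝ) (hC : C = A * B)
    (H1 H2 : Ω → Fin n → Fin (2^m)) (S1 S2 : Ω → Fin n → ℝ)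
    (hmH1 : Measurable H1) (hmH2 : Measurable H2)
    (hmS1 : Measurable S1) (hmS2 : Measurable S2)
    -- the four random functions are mutually independent:
    (hindep : ∀ (f1 f2 : Fin n → Fin (2^m)) (g1 g2 : Fin n → ℝ),
      ℙ {ω | H1 ω = f1 ∧ H2 ω = f2 ∧ S1 ω = g1 ∧ S2 ω = g2}
        = ℙ {ω | H1 ω = f1} * ℙ {ω | H2 ω = f2} * ℙ {ω | S1 ω = g1} * ℙ {ω | S2 ω = g2})
    -- H1 and H2 are pairwise independent uniform families into Fin (2^m):
    (hH1unif : ∀ i u, ℙ {ω | H1 ω i = u} = 1 / (2^m : ℝ≥0∞))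
    (hH1pair : ∀ i i', i ≠ i' → ∀ u v,
      ℙ {ω | H1 ω i = u ∧ H1 ω i' = v} = ℙ {ω | H1 ω i = u} * ℙ {ω | H1 ω i' = v})
    (hH2unif : ∀ j u, ℙ {ω | H2 ω j = u} = 1 / (2^m : ℝ≥0∞))
    (hH2pair : ∀ j j', j ≠ j' → ∀ u v,
      ℙ {ω | H2 ω j = u ∧ H2 ω j' = v} = ℙ {ω | H2 ω j = u} * ℙ {ω | H2 ω j' = v})
    -- S1 and S2 are pairwise independent uniform families of random signs:
    (hS1val : ∀ ω i, S1 ω i ∈ ({-1, 1} : Set ℝ))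
    (hS2val : ∀ ω j, S2 ω j ∈ ({-1, 1} : Set ℝ))
    (hS1unif : ∀ i, ∀ u ∈ ({-1, 1} : Set ℝ), ℙ {ω | S1 ω i = u} = 1 / 2)
    (hS1pair : ∀ i i', i ≠ i' → ∀ u v : ℝ,
      ℙ {ω | S1 ω i = u ∧ S1 ω i' = v} = ℙ {ω | S1 ω i = u} * ℙ {ω | S1 ω i' = v})
    (hS2unif : ∀ j, ∀ u ∈ ({-1, 1} : Set ℝ), ℙ {ω | S2 ω j = u} = 1 / 2)
    (hS2pair : ∀ j j', j ≠ j' → ∀ u v : ℝ,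
      ℙ {ω | S2 ω j = u ∧ S2 ω j' = v} = ℙ {ω | S2 ω j = u} * ℙ {ω | S2 ω j' = v})
    (i j : Fin n) :
    ∫ ω, estimate C (H1 ω) (H2 ω) (S1 ω) (S2 ω) i j ∂ℙ = C i j := by
  classical
  -- the coded random state
  set Φ : Ω → (Fin n → Fin (2^m)) × (Fin n → Fin (2^m)) × (Fin n → Bool) × (Fin n → Bool) :=
    fun ω => (H1 ω, H2 ω, toB S1 ω, toB S2 ω) with hΦdef
  have hΦ : Measurable Φ := by
    rw [hΦdef]
    exact hmH1.prodMk (hmH2.prodMk ((toB_measurable S1 hmS1).prodMk (toB_measurable S2 hmS2)))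
  set g : (Fin n → Fin (2^m)) × (Fin n → Fin (2^m)) × (Fin n → Bool) × (Fin n → Bool) → ℝ :=
    fun t => estimate C t.1 t.2.1 (sg ∘ t.2.2.1) (sg ∘ t.2.2.2) i j with hgdef
  -- the integrand factors through Φ
  have hpt : ∀ ω, estimate C (H1 ω) (H2 ω) (S1 ω) (S2 ω) i j = g (Φ ω) := by
    intro ω
    have e1 : S1 ω = sg ∘ toB S1 ω := by
      funext k
      exact (decide_eq_iff (hS1val ω k) (toB S1 ω k)).1 rfl
    have e2 : S2 ω = sg ∘ toB S2 ω := by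
      funext k
      exact (decide_eq_iff (hS2val ω k) (toB S2 ω k)).1 rfl
    simp only [hgdef, hΦdef]
    rw [← e1, ← e2]
  -- abbreviations for the marginal weights
  set μ1 : (Fin n → Fin (2^m)) → ℝ := fun f => (ℙ {ω | H1 ω = f}).toReal with hμ1
  set μ2 : (Fin n → Fin (2^m)) → ℝ := fun f => (ℙ {ω | H2 ω = f}).toReal with hμ2
  set ν1 : (Fin n → Bool) → ℝ := fun t => (ℙ {ω | S1 ω = sg ∘ t}).toReal with hν1
  set ν2 : (Fin n → Bool) → ℝ := fun t => (ℙ {ω | S2 ω = sg ∘ t}).toReal with hν2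
  -- Step 1: the integral as a finite sum
  have hmap : ∀ t : (Fin n → Fin (2^m)) × (Fin n → Fin (2^m)) × (Fin n → Bool) × (Fin n → Bool),
      ((Measure.map Φ ℙ) {t}).toReal = μ1 t.1 * μ2 t.2.1 * ν1 t.2.2.1 * ν2 t.2.2.2 := by
    rintro ⟨f1, f2, t1, t2⟩
    rw [Measure.map_apply hΦ (measurableSet_singleton _)]
    have hset : Φ ⁻¹' {(f1, f2, t1, t2)}
        = {ω | H1 ω = f1 ∧ H2 ω = f2 ∧ S1 ω = sg ∘ t1 ∧ S2 ω = sg ∘ t2} := by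
      ext ω
      simp only [Set.mem_preimage, Set.mem_singleton_iff, hΦdef, Prod.mk.injEq,
        Set.mem_setOf_eq]
      rw [toB_eq_iff S1 hS1val ω t1, toB_eq_iff S2 hS2val ω t2]
    rw [hset, hindep f1 f2 (sg ∘ t1) (sg ∘ t2)]
    simp only [ENNReal.toReal_mul, hμ1, hμ2, hν1, hν2]
  haveI : IsProbabilityMeasure (Measure.map Φ ℙ) := Measure.isProbabilityMeasure_map hΦ.aemeasurable
  have hint : ∫ ω, estimate C (H1 ω) (H2 ω) (S1 ω) (S2 ω) i j ∂ℙ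
      = ∑ t : (Fin n → Fin (2^m)) × (Fin n → Fin (2^m)) × (Fin n → Bool) × (Fin n → Bool), (μ1 t.1 * μ2 t.2.1 * ν1 t.2.2.1 * ν2 t.2.2.2) * g t := by
    have h1 : ∫ ω, estimate C (H1 ω) (H2 ω) (S1 ω) (S2 ω) i j ∂ℙ
        = ∫ t, g t ∂(Measure.map Φ ℙ) := by
      rw [integral_map hΦ.aemeasurable]
      · exact integral_congr_ae (Filter.Eventually.of_forall hpt)
      · exact (Integrable.of_finite (f := g) (μ := Measure.map Φ ℙ)).aestronglyMeasurable
    rw [h1, integral_fintype (f := g) Integrable.of_finite]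
    refine Finset.sum_congr rfl fun t _ => ?_
    rw [measureReal_def, hmap t, smul_eq_mul]
  rw [hint]
  -- Step 2: expand the estimator as a sum over matrix entries
  set e : Fin n × Fin n → (Fin n → Fin (2^m)) × (Fin n → Fin (2^m)) × (Fin n → Bool) × (Fin n → Bool) → ℝ := fun p t =>
    (if fxor (t.1 p.1) (t.2.1 p.2) = fxor (t.1 i) (t.2.1 j)
      then μ1 t.1 * μ2 t.2.1 else 0)
    * (sg (t.2.2.1 i) * sg (t.2.2.1 p.1) * ν1 t.2.2.1)
    * ((sg (t.2.2.2 j) * sg (t.2.2.2 p.2) * ν2 t.2.2.2) * C p.1 p.2) with hedef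
  have step1 : ∀ t : (Fin n → Fin (2^m)) × (Fin n → Fin (2^m)) × (Fin n → Bool) × (Fin n → Bool),
      (μ1 t.1 * μ2 t.2.1 * ν1 t.2.2.1 * ν2 t.2.2.2) * g t
        = ∑ p : Fin n × Fin n, e p t := by
    intro t
    simp only [hgdef, hedef, estimate, sketch, Finset.sum_filter, Finset.mul_sum]
    refine Finset.sum_congr rfl fun p _ => ?_
    by_cases hc : fxor (t.1 p.1) (t.2.1 p.2) = fxor (t.1 i) (t.2.1 j) <;>
      simp only [hc, if_true, if_false, Function.comp_apply] <;> ring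
  rw [Finset.sum_congr rfl fun t _ => step1 t, Finset.sum_comm]
  -- Step 3: factor each term as a product of independent sums
  set hashF : Fin n × Fin n → ℝ := fun p =>
    ∑ f1 : Fin n → Fin (2^m), ∑ f2 : Fin n → Fin (2^m),
      (if fxor (f1 p.1) (f2 p.2) = fxor (f1 i) (f2 j) then μ1 f1 * μ2 f2 else 0)
    with hhashF
  set sig1 : Fin n × Fin n → ℝ := fun p =>
    ∑ t1 : Fin n → Bool, sg (t1 i) * sg (t1 p.1) * ν1 t1 with hsig1
  set sig2 : Fin n × Fin n → ℝ := fun p =>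
    ∑ t2 : Fin n → Bool, sg (t2 j) * sg (t2 p.2) * ν2 t2 with hsig2
  have step3 : ∀ p : Fin n × Fin n,
      ∑ t : (Fin n → Fin (2^m)) × (Fin n → Fin (2^m)) × (Fin n → Bool) × (Fin n → Bool), e p t = hashF p * sig1 p * (sig2 p * C p.1 p.2) := by
    intro p
    simp only [hedef, hhashF, hsig1, hsig2]
    exact sum4_factor
      (fun a b => if fxor (a p.1) (b p.2) = fxor (a i) (b j) then μ1 a * μ2 b else 0)
      (fun c => sg (c i) * sg (c p.1) * ν1 c)
      (fun d => sg (d j) * sg (d p.2) * ν2 d) (C p.1 p.2)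
  rw [Finset.sum_congr rfl fun p _ => step3 p]
  -- Step 4: only the (i,j) term survives
  have hμ1sum : ∑ f : Fin n → Fin (2^m), μ1 f = 1 := sum_meas_preimage_eq_one H1 hmH1
  have hμ2sum : ∑ f : Fin n → Fin (2^m), μ2 f = 1 := sum_meas_preimage_eq_one H2 hmH2
  have hν1sum : ∑ t : Fin n → Bool, ν1 t = 1 := sum_nu_eq_one S1 hS1val hmS1
  have hν2sum : ∑ t : Fin n → Bool, ν2 t = 1 := sum_nu_eq_one S2 hS2val hmS2
  rw [Finset.sum_eq_single_of_mem (i, j) (Finset.mem_univ _)]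
  · have hH : hashF (i, j) = 1 := by
      have hfac : hashF (i, j)
          = (∑ f : Fin n → Fin (2^m), μ1 f) * (∑ f : Fin n → Fin (2^m), μ2 f) := by
        rw [Finset.sum_mul_sum]
        simp only [hhashF]
        exact Finset.sum_congr rfl fun f1 _ => Finset.sum_congr rfl fun f2 _ => by simp
      rw [hfac, hμ1sum, hμ2sum, one_mul]
    have h1 : sig1 (i, j) = 1 := by
      simp only [hsig1]
      calc ∑ t1 : Fin n → Bool, sg (t1 i) * sg (t1 i) * ν1 t1
          = ∑ t1 : Fin n → Bool, ν1 t1 := by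
            refine Finset.sum_congr rfl fun t1 _ => ?_
            rw [sg_sq, one_mul]
        _ = 1 := hν1sum
    have h2 : sig2 (i, j) = 1 := by
      simp only [hsig2]
      calc ∑ t2 : Fin n → Bool, sg (t2 j) * sg (t2 j) * ν2 t2
          = ∑ t2 : Fin n → Bool, ν2 t2 := by
            refine Finset.sum_congr rfl fun t2 _ => ?_
            rw [sg_sq, one_mul]
        _ = 1 := hν2sum
    rw [hH, h1, h2]; ring
  · rintro ⟨a, b⟩ - hne
    by_cases ha : a = i
    · subst ha
      have hb : b ≠ j := fun hb => hne (by rw [hb])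
      have h2 : sig2 (a, b) = 0 :=
        sum_sign_zero S2 hS2val hmS2 hS2unif hS2pair j b (fun h => hb h.symm)
      rw [h2]; ring
    · have h1 : sig1 (a, b) = 0 :=
        sum_sign_zero S1 hS1val hmS1 hS1unif hS1pair i a (fun h => ha h.symm)
      rw [h1]; ring
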